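/- Let c be a real number with 0 < c ≤ 1 satisfying 2c²·ln((1+c)/c) ≥ 1. Then for every ε > 0 there exists γ > 0 such that for every real μ with 0 ≤ μ ≤ (1−ε)/(1+c), the definite integral ∫₀^μ [1 − (1 − cμ − x)(1 − cx/(1−x))] dx is at most (c−γ)μ. -/

import Mathlib

open Real intervalIntegral

lemma gmono (c : ℝ) (hc0 : 0 < c) (x y : ℝ) (hx : 0 ≤ x) (hxy : x ≤ y)
    (hy : c / (1 + c) ≤ 1 - y) :
    (1+c)*(c+1/2)*x + c^2 * Real.log (1-x) + (y-x)*(1+c)/2 ≤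
      (1+c)*(c+1/2)*y + c^2 * Real.log (1-y) := by
  have h1c : (0:ℝ) < 1 + c := by linarith
  have hy0 : 0 < 1 - y := lt_of_lt_of_le (by positivity) hy
  have hx0 : 0 < 1 - x := by linarith
  have hq : 0 < (1-x)/(1-y) := by positivity
  have hlog : Real.log (1-x) - Real.log (1-y) ≤ (y - x)/(1-y) := by
    rw [← Real.log_div hx0.ne' hy0.ne']
    have h2 := Real.log_le_sub_one_of_pos hq
    have h3 : (1-x)/(1-y) - 1 = (y-x)/(1-y) := by field_simp; ring
    linarith
  have hfrac : c^2 * ((y-x)/(1-y)) ≤ c*(1+c)*(y-x) := by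
    rw [mul_div_assoc', div_le_iff₀ hy0]
    have h4 := mul_le_mul_of_nonneg_left hy
      (mul_nonneg (mul_nonneg hc0.le h1c.le) (by linarith : (0:ℝ) ≤ y - x))
    have h5 : c*(1+c)*(y-x) * (c/(1+c)) = c^2*(y-x) := by field_simp
    linarith
  nlinarith [hlog, hfrac]

lemma integral_eval (c μ : ℝ) (hμ0 : 0 ≤ μ) (hμ1 : μ < 1) :
    (∫ x in (0 : ℝ)..μ, (1 - (1 - c * μ - x) * (1 - c * x / (1 - x)))) =
      (1+c)*(c+1/2)*μ^2 + c^2*μ*Real.log (1-μ) := by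
  have hne : ∀ x ∈ Set.uIcc (0:ℝ) μ, (1:ℝ) - x ≠ 0 := by
    intro x hx
    rw [Set.uIcc_of_le hμ0] at hx
    have := hx.2
    intro h; linarith
  have hident : Set.EqOn (fun x => (1 - (1 - c * μ - x) * (1 - c * x / (1 - x))))
      (fun x => (c*μ + c^2*μ + (1+c)*x) - c^2*μ * (1-x)⁻¹) (Set.uIcc 0 μ) := by
    intro x hx
    have h := hne x hx
    field_simp
    ring
  rw [intervalIntegral.integral_congr hident]
  have hcont : ContinuousOn (fun x : ℝ => (1 - x)⁻¹) (Set.uIcc 0 μ) :=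
    ContinuousOn.inv₀ (by fun_prop) hne
  have hi1 : IntervalIntegrable (fun x => c*μ + c^2*μ + (1+c)*x) MeasureTheory.volume 0 μ :=
    (by fun_prop : Continuous fun x => c*μ + c^2*μ + (1+c)*x).intervalIntegrable 0 μ
  have hi2 : IntervalIntegrable (fun x => c^2*μ * (1-x)⁻¹) MeasureTheory.volume 0 μ :=
    (continuousOn_const.mul hcont).intervalIntegrable
  rw [intervalIntegral.integral_sub hi1 hi2]
  have hinv : (∫ x in (0:ℝ)..μ, (1-x)⁻¹) = - Real.log (1-μ) := by
    have h := intervalIntegral.integral_comp_sub_left (a := (0:ℝ)) (b := μ) (fun y : ℝ => y⁻¹) 1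
    simp only [sub_zero] at h
    rw [h, integral_inv_of_pos (by linarith) one_pos, Real.log_div one_ne_zero (by linarith : (1:ℝ)-μ ≠ 0)]
    simp
  have h2 : (∫ x in (0:ℝ)..μ, c^2*μ * (1-x)⁻¹) = c^2*μ * (- Real.log (1-μ)) := by
    rw [intervalIntegral.integral_const_mul, hinv]
  have h1 : (∫ x in (0:ℝ)..μ, (c*μ + c^2*μ + (1+c)*x)) = (c*μ + c^2*μ)*μ + (1+c)*(μ^2/2) := by
    have ha : IntervalIntegrable (fun _ : ℝ => c*μ + c^2*μ) MeasureTheory.volume 0 μ :=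
      intervalIntegrable_const
    have hb : IntervalIntegrable (fun x : ℝ => (1+c)*x) MeasureTheory.volume 0 μ :=
      (by fun_prop : Continuous fun x : ℝ => (1+c)*x).intervalIntegrable 0 μ
    rw [intervalIntegral.integral_add ha hb, intervalIntegral.integral_const,
      intervalIntegral.integral_const_mul, integral_id]
    simp
    ring
  rw [h1, h2]
  ring

set_option maxHeartbeats 1000000 in
/-- Lemma 2.5 (`l:integeral`), second part: if `0 < c ≤ 1` satisfies
`2c² ln((1+c)/c) ≥ 1`, then for every `ε > 0` there exists `γ > 0` such that for every
`0 ≤ μ ≤ (1−ε)/(1+c)`, `∫₀^μ [1 − (1 − cμ − x)(1 − cx/(1−x))] dx ≤ (c−γ)μ`. -/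
theorem stmt_14 (c : ℝ) (hc0 : 0 < c) (hc1 : c ≤ 1)
    (hc : 1 ≤ 2 * c ^ 2 * Real.log ((1 + c) / c)) :
    ∀ ε : ℝ, 0 < ε → ∃ γ : ℝ, 0 < γ ∧
      ∀ μ : ℝ, 0 ≤ μ → μ ≤ (1 - ε) / (1 + c) →
        (∫ x in (0 : ℝ)..μ, (1 - (1 - c * μ - x) * (1 - c * x / (1 - x)))) ≤ (c - γ) * μ := by
  intro ε hε
  have h1c : (0:ℝ) < 1 + c := by linarith
  set ε' := min ε (1/2) with hε'def
  have hε'0 : 0 < ε' := lt_min hε (by norm_num)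
  have hε'le : ε' ≤ 1/2 := min_le_right _ _
  set b := (1 - ε')/(1+c) with hbdef
  have hb0 : 0 ≤ b := by
    apply div_nonneg _ h1c.le; linarith
  have hbstar : b ≤ 1/(1+c) := by
    rw [hbdef, div_le_div_iff₀ h1c h1c]; nlinarith
  -- value at μ* := 1/(1+c)
  have hgstar : (1+c)*(c+1/2)*(1/(1+c)) + c^2 * Real.log (1 - 1/(1+c)) ≤ c := by
    have h1 : (1+c)*(c+1/2)*(1/(1+c)) = c + 1/2 := by field_simp
    have h2 : (1:ℝ) - 1/(1+c) = c/(1+c) := by field_simp; ring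
    have h3 : Real.log (c/(1+c)) = - Real.log ((1+c)/c) := by
      rw [Real.log_div hc0.ne' h1c.ne', Real.log_div h1c.ne' hc0.ne']; ring
    rw [h1, h2, h3]
    nlinarith
  have hkey := gmono c hc0 b (1/(1+c)) hb0 hbstar (by
    have : (1:ℝ) - 1/(1+c) = c/(1+c) := by field_simp; ring
    rw [this])
  set γ := c - ((1+c)*(c+1/2)*b + c^2 * Real.log (1-b)) with hγdef
  have hdiff : 1/(1+c) - b = ε'/(1+c) := by
    rw [hbdef]; field_simp; ring
  have hγpos : 0 < γ := by
    have : (1/(1+c) - b)*(1+c)/2 = ε'/2 := by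
      rw [hdiff]; field_simp
    rw [hγdef]
    nlinarith
  refine ⟨γ, hγpos, ?_⟩
  intro μ hμ0 hμε
  have hμb : μ ≤ b := by
    refine hμε.trans ?_
    rw [div_le_div_iff₀ h1c h1c]
    nlinarith [min_le_left ε (1/2)]
  have hμ1 : μ < 1 := by
    have : b < 1 := by
      rw [hbdef, div_lt_one h1c]; linarith
    linarith
  rw [integral_eval c μ hμ0 hμ1]
  have hmon := gmono c hc0 μ b hμ0 hμb (by
    have h6 : (1:ℝ) - (1-ε')/(1+c) = (c+ε')/(1+c) := by field_simp; ring
    rw [hbdef, h6, div_le_div_iff₀ h1c h1c]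
    nlinarith)
  have hgle : (1+c)*(c+1/2)*μ + c^2 * Real.log (1-μ) ≤ (1+c)*(c+1/2)*b + c^2 * Real.log (1-b) := by
    nlinarith [hmon]
  have := mul_le_mul_of_nonneg_left hgle hμ0
  have hexp : (c - γ) * μ = ((1+c)*(c+1/2)*b + c^2 * Real.log (1-b)) * μ := by
    rw [hγdef]; ring
  rw [hexp]
  nlinarith [this]
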